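/- Let R be a (left) nearfield which is not distributive, i.e. there exist α, β, λ ∈ R with (α+β)·λ ≠ α·λ + β·λ, and let n be a positive integer. For any v ∈ R^n, span({v}) = v·R = { v·r : r ∈ R } if and only if v has at most one nonzero entry. -/
import Mathlib


/-- A (left) nearfield: `(R,+)` is an abelian group, multiplication is associative
with identity `1 ≠ 0`, every nonzero element has a two-sided inverse,
`0` multiplies to `0` on both sides, and the left distributive law holds. -/
class Nearfield (R : Type*) extends AddCommGroup R, One R, Mul R where
  mul_assoc : ∀ a b c : R, a * b * c = a * (b * c)
  one_mul : ∀ a : R, 1 * a = a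
  mul_one : ∀ a : R, a * 1 = a
  one_ne_zero : (1 : R) ≠ 0
  zero_mul : ∀ a : R, 0 * a = 0
  mul_zero : ∀ a : R, a * 0 = 0
  left_distrib : ∀ a b c : R, a * (b + c) = a * b + a * c
  exists_inv : ∀ a : R, a ≠ 0 → ∃ b : R, a * b = 1 ∧ b * a = 1

variable {R : Type*} [Nearfield R] {n : ℕ}

/-- Right scalar multiplication on `R^n`: `(x · r) j = x j * r`. -/
def vsmul (x : Fin n → R) (r : R) : Fin n → R := fun j => x j * r

/-- An `R`-subgroup of `R^n`: an additive subgroup closed under right scalar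
multiplication. -/
def IsRSubgroup (S : Set (Fin n → R)) : Prop :=
  (0 : Fin n → R) ∈ S ∧ (∀ x ∈ S, ∀ y ∈ S, x + y ∈ S) ∧ (∀ x ∈ S, -x ∈ S) ∧
    ∀ x ∈ S, ∀ r : R, vsmul x r ∈ S

/-- `nvGen V` is the smallest `R`-subgroup of `R^n` containing `V`
(the intersection of all `R`-subgroups containing `V`). -/
def nvGen (V : Set (Fin n → R)) : Set (Fin n → R) :=
  { x | ∀ S : Set (Fin n → R), IsRSubgroup S → V ⊆ S → x ∈ S }

/-- A subspace of `R^n`: an additive subgroup `N` with `(x+y)·r − x·r ∈ N`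
for all `x ∈ R^n`, `y ∈ N`, `r ∈ R`. -/
def IsSubspace (N : Set (Fin n → R)) : Prop :=
  (0 : Fin n → R) ∈ N ∧ (∀ x ∈ N, ∀ y ∈ N, x + y ∈ N) ∧ (∀ x ∈ N, -x ∈ N) ∧
    ∀ x : Fin n → R, ∀ y ∈ N, ∀ r : R, vsmul (x + y) r - vsmul x r ∈ N

/-- `nvSpan V` is the smallest subspace of `R^n` containing `V`. -/
def nvSpan (V : Set (Fin n → R)) : Set (Fin n → R) :=
  { x | ∀ N : Set (Fin n → R), IsSubspace N → V ⊆ N → x ∈ N }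

/-- `nvLC V 0 = V` and `nvLC V (m+1)` is the set of all finite right `R`-linear
combinations of elements of `nvLC V m`. -/
def nvLC (V : Set (Fin n → R)) : ℕ → Set (Fin n → R)
  | 0 => V
  | m + 1 => { x | ∃ F : Finset (Fin n → R), ↑F ⊆ nvLC V m ∧
      ∃ lam : (Fin n → R) → R, x = ∑ w ∈ F, vsmul w (lam w) }

section Aux
variable {R : Type*} [Nearfield R] {n : ℕ}

lemma nf_left_cancel {a : R} (ha : a ≠ 0) {x y : R} (h : a * x = a * y) : x = y := by
  obtain ⟨b, hab, hba⟩ := Nearfield.exists_inv a ha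
  calc x = 1 * x := (Nearfield.one_mul x).symm
    _ = (b * a) * x := by rw [hba]
    _ = b * (a * x) := Nearfield.mul_assoc ..
    _ = b * (a * y) := by rw [h]
    _ = (b * a) * y := (Nearfield.mul_assoc ..).symm
    _ = y := by rw [hba, Nearfield.one_mul]

lemma nf_mul_neg (a b : R) : a * (-b) = -(a * b) := by
  have h : a * b + a * (-b) = 0 := by
    rw [← Nearfield.left_distrib, add_neg_cancel, Nearfield.mul_zero]
  exact (neg_eq_of_add_eq_zero_right h).symm

end Aux

/-- in a non-distributive nearfield, `span({v}) = v·R` iff `v` has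
at most one nonzero entry. -/
theorem span_singleton_eq_line_iff
    (hd : ∃ α β lam : R, (α + β) * lam ≠ α * lam + β * lam)
    (hn : 0 < n) (v : Fin n → R) :
    nvSpan {v} = { x : Fin n → R | ∃ r : R, x = vsmul v r } ↔
      ∀ i j : Fin n, v i ≠ 0 → v j ≠ 0 → i = j := by
  constructor
  · -- forward
    intro h i j hi hj
    by_contra hij
    obtain ⟨α, β, r, hne⟩ := hd
    have hβ : β ≠ 0 := by
      intro hb
      apply hne
      rw [hb, add_zero, Nearfield.zero_mul, add_zero]
    obtain ⟨b, hb1, hb2⟩ := Nearfield.exists_inv β hβ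
    obtain ⟨γ, hγ⟩ : ∃ γ : R, γ = b * α := ⟨_, rfl⟩
    have key : (γ + 1) * r ≠ γ * r + r := by
      intro heq
      apply hne
      have h1 : (α + β) * r = β * ((γ + 1) * r) := by
        rw [← Nearfield.mul_assoc, Nearfield.left_distrib, Nearfield.mul_one,
          hγ, ← Nearfield.mul_assoc, hb1, Nearfield.one_mul]
      have h2 : α * r + β * r = β * (γ * r + r) := by
        rw [Nearfield.left_distrib, ← Nearfield.mul_assoc, hγ, ← Nearfield.mul_assoc,
          hb1, Nearfield.one_mul]
      rw [h1, h2, heq]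
    -- build the witness
    set x : Fin n → R := fun k => if k = i then v i * γ else 0 with hx
    set w : Fin n → R := vsmul (x + v) r - vsmul x r with hw
    have hwspan : w ∈ nvSpan {v} := by
      intro N hN hVN
      exact hN.2.2.2 x v (hVN rfl) r
    rw [h] at hwspan
    obtain ⟨s, hs⟩ := hwspan
    have hwj : w j = v j * r := by
      have hxj : x j = 0 := by
        rw [hx]
        exact if_neg (fun h => hij h.symm)
      simp [hw, vsmul, hxj, Nearfield.zero_mul, zero_add]
    have hrs : r = s := by
      have : v j * r = v j * s := by
        rw [← hwj, hs]; rfl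
      exact nf_left_cancel hj this
    have hwi : w i = (v i * γ + v i) * r - (v i * γ) * r := by
      simp [hw, vsmul, hx]
    have hvi : w i = v i * r := by rw [hs, hrs]; rfl
    apply key
    have heq : (v i * γ + v i) * r = v i * γ * r + v i * r := by
      have := hwi.symm.trans hvi
      have h2 : (v i * γ + v i) * r - v i * γ * r + v i * γ * r
          = v i * r + v i * γ * r := by rw [this]
      rw [sub_add_cancel] at h2
      rw [h2, add_comm]
    have lhs : (v i * γ + v i) * r = v i * ((γ + 1) * r) :=
      calc (v i * γ + v i) * r = (v i * (γ + 1)) * r := by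
            rw [Nearfield.left_distrib, Nearfield.mul_one]
        _ = v i * ((γ + 1) * r) := Nearfield.mul_assoc ..
    have rhs : v i * γ * r + v i * r = v i * (γ * r + r) := by
      rw [Nearfield.left_distrib, Nearfield.mul_assoc]
    exact nf_left_cancel hi (lhs.symm.trans (heq.trans rhs))
  · -- backward
    intro hone
    apply Set.Subset.antisymm
    · -- span ⊆ line : show the line is a subspace containing v
      intro z hz
      apply hz
      · refine ⟨⟨0, ?_⟩, ?_, ?_, ?_⟩
        · funext k; simp [vsmul, Nearfield.mul_zero]
        · rintro _ ⟨p, rfl⟩ _ ⟨q, rfl⟩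
          refine ⟨p + q, funext fun k => ?_⟩
          show v k * p + v k * q = v k * (p + q)
          exact (Nearfield.left_distrib (v k) p q).symm
        · rintro _ ⟨p, rfl⟩
          refine ⟨-p, funext fun k => ?_⟩
          show -(v k * p) = v k * (-p)
          exact (nf_mul_neg (v k) p).symm
        · rintro x _ ⟨s, rfl⟩ r
          by_cases hv : ∃ i0, v i0 ≠ 0
          · obtain ⟨i0, h0⟩ := hv
            obtain ⟨b, hb1, hb2⟩ := Nearfield.exists_inv (v i0) h0
            refine ⟨b * ((x i0 + v i0 * s) * r - x i0 * r), funext fun k => ?_⟩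
            by_cases hk : k = i0
            · subst hk
              show (x k + v k * s) * r - x k * r = v k * (b * _)
              rw [← Nearfield.mul_assoc, hb1, Nearfield.one_mul]
            · have hvk : v k = 0 := by
                by_contra hvk
                exact hk (hone k i0 hvk h0)
              show (x k + v k * s) * r - x k * r = v k * _
              rw [hvk, Nearfield.zero_mul, add_zero, sub_self, Nearfield.zero_mul]
          · push_neg at hv
            refine ⟨0, funext fun k => ?_⟩
            show (x k + v k * s) * r - x k * r = v k * 0
            rw [hv k, Nearfield.zero_mul, add_zero, sub_self, Nearfield.mul_zero]
      · intro y hy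
        rw [Set.mem_singleton_iff] at hy
        exact ⟨1, hy.trans (funext fun k => (Nearfield.mul_one (v k)).symm)⟩
    · -- line ⊆ span
      rintro _ ⟨r, rfl⟩ N hN hVN
      have hv : v ∈ N := hVN rfl
      have := hN.2.2.2 0 v hv r
      have heq : vsmul (0 + v) r - vsmul 0 r = vsmul v r := by
        funext k
        show ((0 : Fin n → R) k + v k) * r - (0 : Fin n → R) k * r = v k * r
        simp [Nearfield.zero_mul, zero_add]
      rwa [heq] at this
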